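/- Let G = N ⋊ H be a semidirect product of groups such that the conjugation action of H on N induces the trivial action on the abelianization N_ab. Then the abelianization of G is isomorphic to N_ab × H_ab. -/

import Mathlib

theorem stmt_9 {N H : Type*} [Group N] [Group H] (φ : H →* MulAut N)
    (hφ : ∀ (h : H) (n : N), (φ h) n * n⁻¹ ∈ commutator N) :
    Nonempty (Abelianization (N ⋊[φ] H) ≃* Abelianization N × Abelianization H) := by
  have key : ∀ (h : H) (n : N), Abelianization.of ((φ h) n) = Abelianization.of n := by
    intro h n
    have h1 : Abelianization.of ((φ h) n * n⁻¹) = 1 :=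
      (QuotientGroup.eq_one_iff _).mpr (hφ h n)
    rw [map_mul, map_inv, mul_inv_eq_one] at h1
    exact h1
  let p : (N ⋊[φ] H) →* Abelianization N × Abelianization H :=
    { toFun := fun g => (Abelianization.of g.1, Abelianization.of g.2)
      map_one' := by simp
      map_mul' := by
        intro a b
        simp only [SemidirectProduct.mul_left, SemidirectProduct.mul_right, map_mul,
          Prod.mk_mul_mk, Prod.mk.injEq]
        exact ⟨by rw [key], trivial⟩ }
  let f : Abelianization (N ⋊[φ] H) →* Abelianization N × Abelianization H :=
    Abelianization.lift p
  let g : Abelianization N × Abelianization H →* Abelianization (N ⋊[φ] H) :=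
    (Abelianization.lift (Abelianization.of.comp SemidirectProduct.inl)).coprod
      (Abelianization.lift (Abelianization.of.comp SemidirectProduct.inr))
  refine ⟨MonoidHom.toMulEquiv f g ?_ ?_⟩
  · ext x
    obtain ⟨n, h⟩ := x
    show g (p ⟨n, h⟩) = Abelianization.of (⟨n, h⟩ : N ⋊[φ] H)
    simp only [g, p, MonoidHom.coe_mk, OneHom.coe_mk, MonoidHom.coprod_apply,
      Abelianization.lift_apply_of, MonoidHom.comp_apply]
    rw [← map_mul]
    congr 1
    exact SemidirectProduct.inl_left_mul_inr_right ⟨n, h⟩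
  · apply MonoidHom.ext
    rintro ⟨a, b⟩
    refine QuotientGroup.induction_on a fun n => ?_
    refine QuotientGroup.induction_on b fun h => ?_
    show f (g (Abelianization.of n, Abelianization.of h)) = (Abelianization.of n, Abelianization.of h)
    simp [f, g, p]
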